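/- Let a : ℤ^d → ℝ satisfy |a_k| ≤ C₁(1+‖k‖)^{-α} and let f : ℝ^d → ℝ satisfy |f(x)| ≤ C₀(1+‖x‖)^{-α}, with α > d. Then the semi-discrete convolution χ(x) = Σ_{k∈ℤ^d} a_k f(x-k) converges absolutely and satisfies |χ(x)| ≤ C₂(1+‖x‖)^{-α} for all x ∈ ℝ^d, for some constant C₂ depending only on C₀, C₁, α, d. -/

import Mathlib

open scoped BigOperators

/-- Euclidean norm of a multi-integer. -/
noncomputable def eNormZ {d : ℕ} (k : Fin d → ℤ) : ℝ :=
  Real.sqrt (∑ i, ((k i : ℝ)) ^ 2)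

/-- Euclidean norm of a real vector given coordinatewise. -/
noncomputable def eNormR {d : ℕ} (x : Fin d → ℝ) : ℝ :=
  Real.sqrt (∑ i, (x i) ^ 2)

lemma eNormR_nonneg {d : ℕ} (x : Fin d → ℝ) : 0 ≤ eNormR x := Real.sqrt_nonneg _

lemma eNormZ_eq {d : ℕ} (k : Fin d → ℤ) : eNormZ k = eNormR (fun i => (k i : ℝ)) := rfl

lemma eNormR_eq_norm {d : ℕ} (x : Fin d → ℝ) :
    eNormR x = ‖(WithLp.equiv 2 (Fin d → ℝ)).symm x‖ := by
  rw [EuclideanSpace.norm_eq]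
  simp [eNormR, Real.norm_eq_abs, sq_abs]

lemma eNormR_triangle {d : ℕ} (x y : Fin d → ℝ) :
    eNormR (x + y) ≤ eNormR x + eNormR y := by
  simp only [eNormR_eq_norm, WithLp.equiv_symm_apply, ← WithLp.toLp_add]
  exact norm_add_le _ _

lemma eNormR_neg {d : ℕ} (x : Fin d → ℝ) : eNormR (-x) = eNormR x := by
  simp [eNormR, neg_sq]

lemma eNormR_sub_symm {d : ℕ} (x y : Fin d → ℝ) : eNormR (x - y) = eNormR (y - x) := by
  rw [← eNormR_neg (x - y), neg_sub]

lemma eNormR_triangle' {d : ℕ} (x y z : Fin d → ℝ) :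
    eNormR (x - z) ≤ eNormR (x - y) + eNormR (y - z) := by
  have := eNormR_triangle (x - y) (y - z)
  simpa using this

lemma summable_int_one_add {p : ℝ} (hp : 1 < p) :
    Summable (fun n : ℤ => (1 + |(n : ℝ)|) ^ (-p)) := by
  have h := Real.summable_abs_int_rpow hp
  apply Summable.of_norm_bounded_eventually h
  have hsub : {n : ℤ | ¬ ‖(1 + |(n : ℝ)|) ^ (-p)‖ ≤ |(n : ℝ)| ^ (-p)} ⊆ {0} := by
    intro n hn
    simp only [Set.mem_setOf_eq, not_le] at hn
    by_contra h0
    have hn0 : (1 : ℝ) ≤ |(n : ℝ)| := by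
      have : n ≠ 0 := by simpa using h0
      have := Int.one_le_abs (by simpa using this)
      calc (1:ℝ) ≤ (|n| : ℤ) := by exact_mod_cast this
        _ = |(n : ℝ)| := by push_cast; ring
    have hle : ‖(1 + |(n : ℝ)|) ^ (-p)‖ ≤ |(n : ℝ)| ^ (-p) := by
      rw [Real.norm_eq_abs, abs_of_nonneg (Real.rpow_nonneg (by linarith) _)]
      exact Real.rpow_le_rpow_of_nonpos (by linarith) (by linarith) (by linarith)
    exact absurd hle (not_le.2 hn)
  exact Filter.eventually_cofinite.2 ((Set.finite_singleton 0).subset hsub)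

lemma summable_pi_prod (d : ℕ) (h : ℤ → ℝ) (h0 : ∀ n, 0 ≤ h n) (hs : Summable h) :
    Summable (fun k : Fin d → ℤ => ∏ i, h (k i)) := by
  induction d with
  | zero =>
      have : (fun k : Fin 0 → ℤ => ∏ i, h (k i)) = fun _ => 1 := by
        funext k; simp
      rw [this]
      exact summable_of_finite_support (Set.toFinite _)
  | succ d ih =>
      have hprod : Summable (fun p : ℤ × (Fin d → ℤ) => h p.1 * ∏ i, h (p.2 i)) :=
        Summable.mul_of_nonneg (f := h) (g := fun k : Fin d → ℤ => ∏ i, h (k i))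
          hs ih (fun n => h0 n) (fun k => Finset.prod_nonneg fun i _ => h0 _)
      have key : Summable ((fun k : Fin (d+1) → ℤ => ∏ i, h (k i)) ∘
          (Fin.consEquiv (fun _ : Fin (d+1) => ℤ))) := by
        apply hprod.congr
        intro p
        simp [Fin.consEquiv, Fin.prod_univ_succ]
      exact (Equiv.summable_iff _).1 key

lemma one_le_one_add_eNormZ {d : ℕ} (k : Fin d → ℤ) : (1:ℝ) ≤ 1 + eNormZ k := by
  have := Real.sqrt_nonneg (∑ i, ((k i : ℝ)) ^ 2)
  simp only [eNormZ]; linarith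

lemma abs_le_eNormR {d : ℕ} (x : Fin d → ℝ) (i : Fin d) : |x i| ≤ eNormR x := by
  rw [← Real.sqrt_sq_eq_abs (x i)]
  apply Real.sqrt_le_sqrt
  exact Finset.single_le_sum (f := fun j => (x j)^2) (fun j _ => sq_nonneg _)
    (Finset.mem_univ i)

lemma summable_g {d : ℕ} {α : ℝ} (hα : (d : ℝ) < α) :
    Summable (fun k : Fin d → ℤ => (1 + eNormZ k) ^ (-α)) := by
  rcases Nat.eq_zero_or_pos d with rfl | hd
  · exact summable_of_finite_support (Set.toFinite _)
  have hd' : (0:ℝ) < d := by exact_mod_cast hd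
  set p := α / d with hpdef
  have hp : 1 < p := (one_lt_div hd').2 hα
  have hp0 : 0 < p := lt_trans one_pos hp
  have hsumh := summable_int_one_add hp
  have hprod := summable_pi_prod d (fun n : ℤ => (1 + |(n:ℝ)|) ^ (-p))
    (fun n => Real.rpow_nonneg (by positivity : (0:ℝ) ≤ 1 + |(n:ℝ)|) _) hsumh
  apply Summable.of_nonneg_of_le
    (fun k => Real.rpow_nonneg (zero_le_one.trans (one_le_one_add_eNormZ k)) _) _ hprod
  intro k
  have hX : (1:ℝ) ≤ 1 + eNormZ k := one_le_one_add_eNormZ k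
  have hfac : ∀ i : Fin d, (1:ℝ) + |(k i : ℝ)| ≤ 1 + eNormZ k := by
    intro i
    have := abs_le_eNormR (fun j => (k j : ℝ)) i
    rw [← eNormZ_eq] at this
    simpa using this
  have hPpos : (0:ℝ) < ∏ i, (1 + |(k i : ℝ)|) :=
    Finset.prod_pos fun i _ => by positivity
  have hPle : (∏ i, ((1:ℝ) + |(k i : ℝ)|)) ≤ (1 + eNormZ k) ^ (d : ℕ) := by
    calc (∏ i, ((1:ℝ) + |(k i : ℝ)|)) ≤ ∏ _i : Fin d, (1 + eNormZ k) :=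
          Finset.prod_le_prod (fun i _ => by positivity) (fun i _ => hfac i)
      _ = (1 + eNormZ k) ^ (d : ℕ) := by simp
  have key : (1 + eNormZ k) ^ (-α) = ((1 + eNormZ k) ^ (d:ℕ)) ^ (-p) := by
    rw [← Real.rpow_natCast (1 + eNormZ k) d, ← Real.rpow_mul (by linarith)]
    congr 1
    rw [hpdef]
    field_simp
  rw [key]
  calc ((1 + eNormZ k) ^ (d:ℕ)) ^ (-p) ≤ (∏ i, ((1:ℝ) + |(k i : ℝ)|)) ^ (-p) :=
        Real.rpow_le_rpow_of_nonpos hPpos hPle (by linarith)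
    _ = ∏ i, ((1:ℝ) + |(k i : ℝ)|) ^ (-p) :=
        (Real.finset_prod_rpow _ _ (fun i _ => by positivity) _).symm

lemma one_le_one_add_eNormR {d : ℕ} (x : Fin d → ℝ) : (1:ℝ) ≤ 1 + eNormR x := by
  have := eNormR_nonneg x; linarith

lemma abstract_key {A B X α : ℝ} (hα : 0 < α) (hA : 1 ≤ A) (hB : 1 ≤ B) (hX : 1 ≤ X)
    (hsum : X ≤ A + B) :
    A ^ (-α) * B ^ (-α) ≤ 2 ^ α * X ^ (-α) * (A ^ (-α) + B ^ (-α)) := by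
  have ha : (0:ℝ) ≤ A ^ (-α) := Real.rpow_nonneg (by linarith) _
  have hb : (0:ℝ) ≤ B ^ (-α) := Real.rpow_nonneg (by linarith) _
  have hXpos : (0:ℝ) < X := by linarith
  have hc : (0:ℝ) ≤ 2 ^ α * X ^ (-α) :=
    mul_nonneg (Real.rpow_nonneg (by norm_num) _) (Real.rpow_nonneg (by linarith) _)
  have hhalf : (X / 2 : ℝ) ^ (-α) = 2 ^ α * X ^ (-α) := by
    rw [Real.div_rpow (by linarith) (by norm_num), Real.rpow_neg (by norm_num : (0:ℝ) ≤ 2),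
      div_inv_eq_mul]
    ring
  rcases le_total A B with hAB | hAB
  · have hB2 : X / 2 ≤ B := by linarith
    have h1 : B ^ (-α) ≤ 2 ^ α * X ^ (-α) := by
      rw [← hhalf]
      exact Real.rpow_le_rpow_of_nonpos (by linarith) hB2 (by linarith)
    calc A ^ (-α) * B ^ (-α) ≤ A ^ (-α) * (2 ^ α * X ^ (-α)) :=
          mul_le_mul_of_nonneg_left h1 ha
      _ = 2 ^ α * X ^ (-α) * A ^ (-α) := by ring
      _ ≤ 2 ^ α * X ^ (-α) * (A ^ (-α) + B ^ (-α)) :=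
          mul_le_mul_of_nonneg_left (le_add_of_nonneg_right hb) hc
  · have hA2 : X / 2 ≤ A := by linarith
    have h1 : A ^ (-α) ≤ 2 ^ α * X ^ (-α) := by
      rw [← hhalf]
      exact Real.rpow_le_rpow_of_nonpos (by linarith) hA2 (by linarith)
    calc A ^ (-α) * B ^ (-α) ≤ 2 ^ α * X ^ (-α) * B ^ (-α) :=
          mul_le_mul_of_nonneg_right h1 hb
      _ ≤ 2 ^ α * X ^ (-α) * (A ^ (-α) + B ^ (-α)) :=
          mul_le_mul_of_nonneg_left (le_add_of_nonneg_left ha) hc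

lemma eNormZ_sub_cast {d : ℕ} (m k : Fin d → ℤ) :
    eNormZ (m - k) = eNormR ((fun i => (m i : ℝ)) - fun i => (k i : ℝ)) := by
  rw [eNormZ_eq]
  congr 1
  funext i
  push_cast
  simp

lemma shifted_bound {d : ℕ} {α : ℝ} (hα : 0 < α) (x : Fin d → ℝ) (k m : Fin d → ℤ)
    (hm : eNormR (x - fun i => (m i : ℝ)) ≤ Real.sqrt d) :
    (1 + eNormR (x - fun i => (k i : ℝ))) ^ (-α)
      ≤ (1 + Real.sqrt d) ^ α * (1 + eNormZ (m - k)) ^ (-α) := by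
  set s := Real.sqrt d with hsdef
  have hs : 0 ≤ s := Real.sqrt_nonneg _
  set B := 1 + eNormR (x - fun i => (k i : ℝ)) with hBdef
  have hB : 1 ≤ B := one_le_one_add_eNormR _
  have hN0 : 0 ≤ eNormZ (m - k) := by rw [eNormZ_eq]; exact eNormR_nonneg _
  have htri : eNormZ (m - k) ≤ s + (B - 1) := by
    rw [eNormZ_sub_cast]
    calc eNormR ((fun i => (m i : ℝ)) - fun i => (k i : ℝ))
        ≤ eNormR ((fun i => (m i : ℝ)) - x) + eNormR (x - fun i => (k i : ℝ)) :=
          eNormR_triangle' _ _ _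
      _ ≤ s + (B - 1) := by
          rw [eNormR_sub_symm]
          have : eNormR (x - fun i => (m i : ℝ)) ≤ s := hm
          simp only [hBdef]
          linarith
  have hkey : 1 + eNormZ (m - k) ≤ (1 + s) * B := by nlinarith
  have h1 : ((1 + s) * B) ^ (-α) ≤ (1 + eNormZ (m - k)) ^ (-α) :=
    Real.rpow_le_rpow_of_nonpos (by linarith) hkey (by linarith)
  have h2 : ((1 + s) * B) ^ (-α) = (1 + s) ^ (-α) * B ^ (-α) :=
    Real.mul_rpow (by linarith) (by linarith)
  have h3 : (1 + s) ^ α * ((1 + s) ^ (-α) * B ^ (-α)) = B ^ (-α) := by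
    rw [← mul_assoc, ← Real.rpow_add (by linarith), add_neg_cancel, Real.rpow_zero, one_mul]
  calc B ^ (-α) = (1 + s) ^ α * (((1 + s) * B) ^ (-α)) := by rw [h2, h3]
    _ ≤ (1 + s) ^ α * (1 + eNormZ (m - k)) ^ (-α) :=
        mul_le_mul_of_nonneg_left h1 (Real.rpow_nonneg (by linarith) _)

lemma round_close {d : ℕ} (x : Fin d → ℝ) :
    eNormR (x - fun i => ((round (x i) : ℤ) : ℝ)) ≤ Real.sqrt d := by
  rw [eNormR]
  apply Real.sqrt_le_sqrt
  calc (∑ i, ((x - fun i => ((round (x i) : ℤ) : ℝ)) i) ^ 2)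
      ≤ ∑ _i : Fin d, (1:ℝ) := by
        apply Finset.sum_le_sum
        intro i _
        have h := abs_sub_round (x i)
        have : |(x - fun i => ((round (x i) : ℤ) : ℝ)) i| ≤ 1 := by
          simp only [Pi.sub_apply]
          calc |x i - ((round (x i) : ℤ) : ℝ)| ≤ 1/2 := h
            _ ≤ 1 := by norm_num
        calc ((x - fun i => ((round (x i) : ℤ) : ℝ)) i) ^ 2
            = |(x - fun i => ((round (x i) : ℤ) : ℝ)) i| ^ 2 := (sq_abs _).symm
          _ ≤ 1 ^ 2 := by
              apply pow_le_pow_left₀ (abs_nonneg _) this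
          _ = 1 := one_pow 2
    _ = (d : ℝ) := by simp

theorem stmt_4 {d : ℕ} (α C₀ C₁ : ℝ) (hα : (d : ℝ) < α) (hC₀ : 0 < C₀) (hC₁ : 0 < C₁)
    (a : (Fin d → ℤ) → ℝ) (f : (Fin d → ℝ) → ℝ)
    (ha : ∀ k, |a k| ≤ C₁ * (1 + eNormZ k) ^ (-α))
    (hf : ∀ x, |f x| ≤ C₀ * (1 + eNormR x) ^ (-α)) :
    (∀ x : Fin d → ℝ,
        Summable fun k : Fin d → ℤ => |a k * f (x - fun i => (k i : ℝ))|) ∧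
    ∃ C₂ : ℝ, ∀ x : Fin d → ℝ,
        |∑' k : Fin d → ℤ, a k * f (x - fun i => (k i : ℝ))|
          ≤ C₂ * (1 + eNormR x) ^ (-α) := by
  have hα0 : (0:ℝ) < α := lt_of_le_of_lt (Nat.cast_nonneg d) hα
  have hS : Summable (fun k : Fin d → ℤ => (1 + eNormZ k) ^ (-α)) := summable_g hα
  set g : (Fin d → ℤ) → ℝ := fun k => (1 + eNormZ k) ^ (-α) with hgdef
  set S := ∑' k, g k with hSdef
  set t := (1 + Real.sqrt d) ^ α with htdef
  have hsd : (0:ℝ) ≤ Real.sqrt d := Real.sqrt_nonneg _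
  have ht : 0 ≤ t := Real.rpow_nonneg (by linarith) _
  have hg0 : ∀ k, 0 ≤ g k := fun k =>
    Real.rpow_nonneg (zero_le_one.trans (one_le_one_add_eNormZ k)) _
  have main : ∀ x : Fin d → ℝ,
      (Summable fun k : Fin d → ℤ => |a k * f (x - fun i => (k i : ℝ))|) ∧
      (∑' k : Fin d → ℤ, |a k * f (x - fun i => (k i : ℝ))|) ≤
        C₀ * C₁ * 2 ^ α * (S + t * S) * (1 + eNormR x) ^ (-α) := by
    intro x
    set m : Fin d → ℤ := fun i => round (x i) with hmdef
    have hm : eNormR (x - fun i => ((m i : ℤ) : ℝ)) ≤ Real.sqrt d := round_close x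
    set X := 1 + eNormR x with hXdef
    have hX1 : 1 ≤ X := one_le_one_add_eNormR x
    have hXa : 0 ≤ X ^ (-α) := Real.rpow_nonneg (by linarith) _
    have h2a : (0:ℝ) ≤ 2 ^ α := Real.rpow_nonneg (by norm_num) _
    set bnd : (Fin d → ℤ) → ℝ :=
      fun k => C₀ * C₁ * (2 ^ α * X ^ (-α)) * (g k + t * g (m - k)) with hbnd
    have hshift : Summable (fun k : Fin d → ℤ => g (m - k)) := by
      have h := (Equiv.summable_iff (Equiv.subLeft m) (f := g)).2 hS
      exact h.congr fun k => by simp [Equiv.subLeft]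
    have hbnds : Summable bnd := (hS.add (hshift.mul_left t)).mul_left _
    have hpt : ∀ k, |a k * f (x - fun i => (k i : ℝ))| ≤ bnd k := by
      intro k
      set A := 1 + eNormZ k with hAdef
      set B := 1 + eNormR (x - fun i => (k i : ℝ)) with hBdef
      have hA1 : 1 ≤ A := one_le_one_add_eNormZ k
      have hB1 : 1 ≤ B := one_le_one_add_eNormR _
      have hAa : 0 ≤ A ^ (-α) := Real.rpow_nonneg (by linarith) _
      have hBa : 0 ≤ B ^ (-α) := Real.rpow_nonneg (by linarith) _
      have htr : X ≤ A + B := by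
        have h1 : eNormR x ≤ eNormZ k + eNormR (x - fun i => (k i : ℝ)) := by
          have h2 := eNormR_triangle (fun i => ((k i : ℤ) : ℝ))
            (x - fun i => ((k i : ℤ) : ℝ))
          rw [← eNormZ_eq] at h2
          simpa using h2
        simp only [hXdef, hAdef, hBdef]
        linarith
      have hprod : |a k * f (x - fun i => (k i : ℝ))| ≤ C₀ * C₁ * (A ^ (-α) * B ^ (-α)) := by
        rw [abs_mul]
        calc |a k| * |f (x - fun i => (k i : ℝ))|
            ≤ (C₁ * A ^ (-α)) * (C₀ * B ^ (-α)) :=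
              mul_le_mul (ha k) (hf _) (abs_nonneg _) (by positivity)
          _ = C₀ * C₁ * (A ^ (-α) * B ^ (-α)) := by ring
      have hkey := abstract_key hα0 hA1 hB1 hX1 htr
      have hsh : B ^ (-α) ≤ t * g (m - k) := shifted_bound hα0 x k m hm
      calc |a k * f (x - fun i => (k i : ℝ))|
          ≤ C₀ * C₁ * (A ^ (-α) * B ^ (-α)) := hprod
        _ ≤ C₀ * C₁ * (2 ^ α * X ^ (-α) * (A ^ (-α) + B ^ (-α))) := by
            apply mul_le_mul_of_nonneg_left hkey (by positivity)
        _ ≤ C₀ * C₁ * (2 ^ α * X ^ (-α) * (g k + t * g (m - k))) := by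
            apply mul_le_mul_of_nonneg_left _ (by positivity)
            apply mul_le_mul_of_nonneg_left _ (by positivity)
            exact add_le_add le_rfl hsh
        _ = bnd k := by simp only [hbnd]; ring
    have hsummable : Summable fun k : Fin d → ℤ => |a k * f (x - fun i => (k i : ℝ))| :=
      Summable.of_nonneg_of_le (fun k => abs_nonneg _) hpt hbnds
    refine ⟨hsummable, ?_⟩
    have htsum_bnd : ∑' k, bnd k = C₀ * C₁ * 2 ^ α * (S + t * S) * X ^ (-α) := by
      have hshift_tsum : ∑' k, g (m - k) = S := by
        rw [hSdef]
        have := Equiv.tsum_eq (Equiv.subLeft m) g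
        rw [← this]
        apply tsum_congr
        intro k
        simp [Equiv.subLeft]
      calc ∑' k, bnd k
          = C₀ * C₁ * (2 ^ α * X ^ (-α)) * ∑' k, (g k + t * g (m - k)) := tsum_mul_left
        _ = C₀ * C₁ * (2 ^ α * X ^ (-α)) * (S + t * S) := by
            rw [Summable.tsum_add hS (hshift.mul_left t), tsum_mul_left, hshift_tsum, ← hSdef]
        _ = C₀ * C₁ * 2 ^ α * (S + t * S) * X ^ (-α) := by ring
    calc (∑' k : Fin d → ℤ, |a k * f (x - fun i => (k i : ℝ))|)
        ≤ ∑' k, bnd k := Summable.tsum_le_tsum hpt hsummable hbnds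
      _ = C₀ * C₁ * 2 ^ α * (S + t * S) * X ^ (-α) := htsum_bnd
  refine ⟨fun x => (main x).1, ⟨C₀ * C₁ * 2 ^ α * (S + t * S), fun x => ?_⟩⟩
  calc |∑' k : Fin d → ℤ, a k * f (x - fun i => (k i : ℝ))|
      ≤ ∑' k : Fin d → ℤ, |a k * f (x - fun i => (k i : ℝ))| := by
        have := norm_tsum_le_tsum_norm (f := fun k : Fin d → ℤ =>
          a k * f (x - fun i => (k i : ℝ)))
          (by simp only [Real.norm_eq_abs]; exact (main x).1)
        simpa only [Real.norm_eq_abs] using this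
    _ ≤ C₀ * C₁ * 2 ^ α * (S + t * S) * (1 + eNormR x) ^ (-α) := (main x).2
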